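/- Suppose each f_i : ℝ^d → ℝ (i = 1,…,n, n ≥ 2) is differentiable, F(w) = (1/n) ∑_{i=1}^n f_i(w) is Λ-smooth and bounded below by F̂, and there exist γ ≥ 0 and η > 0 such that for all w ∈ ℝ^d the uniform average over all size-b subsets S of {1,…,n} satisfies E_S[‖∇F^S(w)‖²] ≤ γ² + η ‖∇F(w)‖². Let S_0, S_1, S_2, … be independent uniformly distributed size-b subsets of {1,…,n}; for each k let H_k be a real symmetric d×d matrix that is a function of S_0,…,S_{k−1} only and satisfies μ₁ I ⪯ H_k ⪯ μ₂ I (0 < μ₁ ≤ μ₂). Let α ∈ (0, μ₁ / (μ₂² η Λ)) and define w_{k+1} = w_k − α H_k ∇F^{S_k}(w_k) from a deterministic w_0. Then for all L ≥ 1: (1/L) ∑_{k=0}^{L−1} E[‖∇F(w_k)‖²] ≤ α μ₂² γ² Λ / μ₁ + 2 (F(w_0) − F̂) / (α μ₁ L). -/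

import Mathlib

open scoped Matrix RealInnerProductSpace
open Finset

section Aux

variable {d : ℕ}

lemma inner_toEuc (M : Matrix (Fin d) (Fin d) ℝ) (x y : EuclideanSpace ℝ (Fin d)) :
    ⟪x, Matrix.toEuclideanLin M y⟫ =
      (WithLp.equiv 2 _ x) ⬝ᵥ (M *ᵥ (WithLp.equiv 2 _ y)) := by
  simp [PiLp.inner_apply, Matrix.toEuclideanLin_apply, dotProduct, mul_comm]

lemma quad_lower (M : Matrix (Fin d) (Fin d) ℝ) (μ₁ : ℝ)
    (h : (M - μ₁ • (1 : Matrix (Fin d) (Fin d) ℝ)).PosSemidef) (x : EuclideanSpace ℝ (Fin d)) :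
    μ₁ * ‖x‖ ^ 2 ≤ ⟪x, Matrix.toEuclideanLin M x⟫ := by
  have h2 := h.dotProduct_mulVec_nonneg (WithLp.equiv 2 (Fin d → ℝ) x)
  rw [inner_toEuc]
  have hx : ‖x‖ ^ 2 = (WithLp.equiv 2 _ x) ⬝ᵥ (WithLp.equiv 2 _ x) := by
    rw [← real_inner_self_eq_norm_sq, PiLp.inner_apply]
    simp [dotProduct, sq]
  rw [hx]
  simp only [Matrix.sub_mulVec, dotProduct_sub, Matrix.smul_mulVec,
    Matrix.one_mulVec, star_trivial, dotProduct_smul, smul_eq_mul] at h2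
  linarith

lemma dotProduct_mulVec_comm (M : Matrix (Fin d) (Fin d) ℝ) (hMs : M.IsSymm)
    (v w : Fin d → ℝ) : v ⬝ᵥ M *ᵥ w = w ⬝ᵥ M *ᵥ v := by
  rw [Matrix.dotProduct_mulVec, ← Matrix.mulVec_transpose, hMs.eq, dotProduct_comm]

lemma norm_lin_sq_le (M : Matrix (Fin d) (Fin d) ℝ) (μ₁ μ₂ : ℝ) (hμ : 0 < μ₁) (hμμ : μ₁ ≤ μ₂)
    (hMs : M.IsSymm)
    (h1 : (M - μ₁ • (1 : Matrix (Fin d) (Fin d) ℝ)).PosSemidef)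
    (h2 : (μ₂ • (1 : Matrix (Fin d) (Fin d) ℝ) - M).PosSemidef)
    (x : EuclideanSpace ℝ (Fin d)) :
    ‖Matrix.toEuclideanLin M x‖ ^ 2 ≤ μ₂ ^ 2 * ‖x‖ ^ 2 := by
  have hμ₂ : 0 < μ₂ := lt_of_lt_of_le hμ hμμ
  set x' : Fin d → ℝ := WithLp.equiv 2 _ x with hx'
  set y : Fin d → ℝ := M *ᵥ x' with hy
  have hnx : ‖x‖ ^ 2 = x' ⬝ᵥ x' := by
    rw [← real_inner_self_eq_norm_sq, PiLp.inner_apply]; simp [dotProduct, hx', sq]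
  have hny : ‖Matrix.toEuclideanLin M x‖ ^ 2 = y ⬝ᵥ y := by
    rw [← real_inner_self_eq_norm_sq, PiLp.inner_apply]
    simp [dotProduct, Matrix.toEuclideanLin_apply, hy, hx', sq]
  have hMpsd : ∀ z : Fin d → ℝ, 0 ≤ z ⬝ᵥ M *ᵥ z := by
    intro z
    have := h1.dotProduct_mulVec_nonneg z
    have hz : (0:ℝ) ≤ z ⬝ᵥ z := Finset.sum_nonneg fun i _ => mul_self_nonneg _
    simp only [Matrix.sub_mulVec, dotProduct_sub, Matrix.smul_mulVec,
      Matrix.one_mulVec, star_trivial, dotProduct_smul, smul_eq_mul] at this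
    nlinarith
  have hupper : ∀ z : Fin d → ℝ, z ⬝ᵥ M *ᵥ z ≤ μ₂ * (z ⬝ᵥ z) := by
    intro z
    have := h2.dotProduct_mulVec_nonneg z
    simp only [Matrix.sub_mulVec, dotProduct_sub, Matrix.smul_mulVec,
      Matrix.one_mulVec, star_trivial, dotProduct_smul, smul_eq_mul] at this
    linarith
  have hxy : x' ⬝ᵥ M *ᵥ y = y ⬝ᵥ y := by
    rw [dotProduct_mulVec_comm M hMs, hy]
  have key := hMpsd (μ₂ • x' - y)
  have hexp : (μ₂ • x' - y) ⬝ᵥ M *ᵥ (μ₂ • x' - y)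
      = μ₂ ^ 2 * (x' ⬝ᵥ M *ᵥ x') - 2 * μ₂ * (y ⬝ᵥ y) + y ⬝ᵥ M *ᵥ y := by
    simp only [Matrix.mulVec_sub, Matrix.mulVec_smul, dotProduct_sub,
      sub_dotProduct, smul_dotProduct, dotProduct_smul, smul_eq_mul]
    rw [dotProduct_mulVec_comm M hMs y x', hxy]
    ring
  have h3 := hupper x'
  have h4 := hupper y
  rw [hnx, hny]
  nlinarith [hMpsd x', key, hexp]

lemma grad_avg {n : ℕ} (f : Fin n → EuclideanSpace ℝ (Fin d) → ℝ)
    (hdiff : ∀ i, Differentiable ℝ (f i))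
    (F : EuclideanSpace ℝ (Fin d) → ℝ) (hF : ∀ w, F w = (n : ℝ)⁻¹ * ∑ i, f i w)
    (w : EuclideanSpace ℝ (Fin d)) :
    gradient F w = (n : ℝ)⁻¹ • ∑ i, gradient (f i) w := by
  have hFe : F = fun w => (n : ℝ)⁻¹ * ∑ i, f i w := funext hF
  have hds : DifferentiableAt ℝ (fun w => ∑ i, f i w) w :=
    DifferentiableAt.fun_sum (fun i _ => (hdiff i).differentiableAt)
  have h1 : fderiv ℝ F w = (n : ℝ)⁻¹ • ∑ i, fderiv ℝ (f i) w := by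
    rw [hFe, fderiv_const_mul hds, fderiv_fun_sum (fun i _ => (hdiff i).differentiableAt)]
  unfold gradient
  rw [h1, map_smul, map_sum]

lemma descent_lemma {E : Type*} [NormedAddCommGroup E] [InnerProductSpace ℝ E]
    [CompleteSpace E]
    {F : E → ℝ} (hFdiff : Differentiable ℝ F) {Λ : ℝ}
    (hsmooth : ∀ w w' : E, ‖gradient F w' - gradient F w‖ ≤ Λ * ‖w' - w‖)
    (x y : E) :
    F y ≤ F x + ⟪gradient F x, y - x⟫ + Λ / 2 * ‖y - x‖ ^ 2 := by
  set v := y - x with hv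
  set g' : ℝ → ℝ := fun t => ⟪gradient F (x + t • v), v⟫ with hg'
  have key : ∀ t : ℝ, HasDerivAt (fun t : ℝ => F (x + t • v)) (g' t) t := by
    intro t
    have h1 : HasDerivAt (fun t : ℝ => x + t • v) v t := by
      simpa using ((hasDerivAt_id t).smul_const v).const_add x
    have h2 : HasFDerivAt F (InnerProductSpace.toDual ℝ E (gradient F (x + t • v)))
        (x + t • v) := (hFdiff _).hasGradientAt.hasFDerivAt
    have := h2.comp_hasDerivAt t h1
    exact this
  have hgradcont : Continuous (gradient F) := by
    have : LipschitzWith (Real.toNNReal Λ) (gradient F) := by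
      apply LipschitzWith.of_dist_le_mul
      intro a b
      rw [dist_eq_norm, dist_eq_norm]
      calc ‖gradient F a - gradient F b‖ ≤ Λ * ‖a - b‖ := hsmooth b a
        _ ≤ Real.toNNReal Λ * ‖a - b‖ := by
            gcongr; exact Real.le_coe_toNNReal Λ
    exact this.continuous
  have hcurve : Continuous fun t : ℝ => x + t • v := by continuity
  have hg'cont : Continuous g' := (hgradcont.comp hcurve).inner continuous_const
  have hint : IntervalIntegrable g' MeasureTheory.volume 0 1 := hg'cont.intervalIntegrable _ _
  have hFTC : ∫ t in (0:ℝ)..1, g' t = F y - F x := by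
    have := intervalIntegral.integral_eq_sub_of_hasDerivAt
      (f := fun t : ℝ => F (x + t • v)) (f' := g') (a := 0) (b := 1)
      (fun t _ => key t) hint
    simpa [hv] using this
  have hb : ∀ t ∈ Set.Icc (0:ℝ) 1, g' t ≤ g' 0 + Λ * ‖v‖ ^ 2 * t := by
    intro t ht
    have h5 : g' t - g' 0 = ⟪gradient F (x + t • v) - gradient F (x + (0:ℝ) • v), v⟫ := by
      simp [hg', inner_sub_left]
    have h6 := real_inner_le_norm (gradient F (x + t • v) - gradient F (x + (0:ℝ) • v)) v
    have h7 := hsmooth (x + (0:ℝ) • v) (x + t • v)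
    have h8 : ‖(x + t • v) - (x + (0:ℝ) • v)‖ = t * ‖v‖ := by
      simp [norm_smul, abs_of_nonneg ht.1]
    rw [h8] at h7
    have h9 : ‖gradient F (x + t • v) - gradient F (x + (0:ℝ) • v)‖ * ‖v‖
        ≤ Λ * (t * ‖v‖) * ‖v‖ := by
      apply mul_le_mul_of_nonneg_right h7 (norm_nonneg v)
    nlinarith [norm_nonneg v]
  have hint2 : IntervalIntegrable (fun t : ℝ => g' 0 + Λ * ‖v‖ ^ 2 * t)
      MeasureTheory.volume 0 1 :=
    (continuous_const.add (continuous_const.mul continuous_id)).intervalIntegrable _ _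
  have hmono := intervalIntegral.integral_mono_on (by norm_num : (0:ℝ) ≤ 1) hint hint2 hb
  have hval : (∫ t in (0:ℝ)..1, (g' 0 + Λ * ‖v‖ ^ 2 * t)) = g' 0 + Λ * ‖v‖ ^ 2 / 2 := by
    rw [intervalIntegral.integral_add intervalIntegrable_const
      ((by continuity : Continuous fun t : ℝ => Λ * ‖v‖ ^ 2 * t).intervalIntegrable _ _),
      intervalIntegral.integral_const, intervalIntegral.integral_const_mul, integral_id]
    simp; ring
  have hg0 : g' 0 = ⟪gradient F x, y - x⟫ := by simp [hg', hv]
  rw [hFTC, hval, hg0] at hmono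
  linarith

lemma card_containing {n b : ℕ} (hb1 : 1 ≤ b) (i : Fin n) :
    ((Finset.powersetCard b (Finset.univ : Finset (Fin n))).filter (fun S => i ∈ S)).card
      = (n - 1).choose (b - 1) := by
  have hcard : ((Finset.powersetCard b (Finset.univ : Finset (Fin n))).filter
        (fun S => i ∈ S)).card
      = (Finset.powersetCard (b - 1) (Finset.univ.erase i)).card := by
    refine Finset.card_nbij' (fun S => S.erase i) (fun T => insert i T) ?_ ?_ ?_ ?_
    · intro S hS
      simp only [Finset.mem_coe, mem_filter, Finset.mem_powersetCard] at hS
      simp only [Finset.mem_coe, Finset.mem_powersetCard]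
      refine ⟨fun x hx => Finset.mem_erase.mpr ⟨(Finset.mem_erase.mp hx).1, Finset.mem_univ _⟩, ?_⟩
      rw [Finset.card_erase_of_mem hS.2, hS.1.2]
    · intro T hT
      simp only [Finset.mem_coe, Finset.mem_powersetCard] at hT
      have hiT : i ∉ T := fun h => (Finset.mem_erase.mp (hT.1 h)).1 rfl
      simp only [Finset.mem_coe, mem_filter, Finset.mem_powersetCard]
      refine ⟨⟨Finset.subset_univ _, ?_⟩, Finset.mem_insert_self _ _⟩
      rw [Finset.card_insert_of_notMem hiT, hT.2]
      omega
    · intro S hS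
      simp only [Finset.mem_coe, mem_filter] at hS
      exact Finset.insert_erase hS.2
    · intro T hT
      simp only [Finset.mem_coe, Finset.mem_powersetCard] at hT
      have hiT : i ∉ T := fun h => (Finset.mem_erase.mp (hT.1 h)).1 rfl
      exact Finset.erase_insert hiT
  rw [hcard, Finset.card_powersetCard, Finset.card_erase_of_mem (Finset.mem_univ i),
    Finset.card_univ, Fintype.card_fin]

lemma sum_powersetCard_sum {E : Type*} [AddCommMonoid E] {n b : ℕ} (hb1 : 1 ≤ b)
    (v : Fin n → E) :
    ∑ S ∈ Finset.powersetCard b (Finset.univ : Finset (Fin n)), ∑ i ∈ S, v i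
      = (n - 1).choose (b - 1) • ∑ i, v i := by
  have h1 : ∀ S ∈ Finset.powersetCard b (Finset.univ : Finset (Fin n)),
      ∑ i ∈ S, v i = ∑ i : Fin n, if i ∈ S then v i else 0 := by
    intro S _
    rw [Finset.sum_ite_mem, Finset.univ_inter]
  rw [Finset.sum_congr rfl h1, Finset.sum_comm, Finset.smul_sum]
  refine Finset.sum_congr rfl fun i _ => ?_
  rw [← Finset.sum_filter, Finset.sum_const, card_containing hb1 i]

lemma sum_piFinset_snoc {n : ℕ} {E : Type*} [AddCommMonoid E] (k : ℕ)
    (P : Finset (Finset (Fin n))) (X : (Fin (k + 1) → Finset (Fin n)) → E) :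
    ∑ ω ∈ Fintype.piFinset (fun _ : Fin (k + 1) => P), X ω
      = ∑ ω ∈ Fintype.piFinset (fun _ : Fin k => P), ∑ S ∈ P, X (Fin.snoc ω S) := by
  have hps : ∑ ω ∈ Fintype.piFinset (fun _ : Fin k => P), ∑ S ∈ P, X (Fin.snoc ω S)
      = ∑ p ∈ (Fintype.piFinset (fun _ : Fin k => P)) ×ˢ P, X (Fin.snoc p.1 p.2) :=
    (Finset.sum_product _ _ (fun p => X (Fin.snoc p.1 p.2))).symm
  rw [hps]
  refine Finset.sum_nbij' (fun ω => (Fin.init ω, ω (Fin.last k)))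
    (fun p => Fin.snoc p.1 p.2) ?_ ?_ ?_ ?_ ?_
  · intro ω hω
    simp only [Fintype.mem_piFinset] at hω
    simp only [Finset.mem_product, Fintype.mem_piFinset]
    exact ⟨fun i => hω _, hω _⟩
  · intro p hp
    simp only [Finset.mem_product, Fintype.mem_piFinset] at hp
    simp only [Fintype.mem_piFinset]
    intro i
    refine Fin.lastCases ?_ ?_ i
    · rw [Fin.snoc_last]; exact hp.2
    · intro j; rw [Fin.snoc_castSucc]; exact hp.1 j
  · intro ω _; exact Fin.snoc_init_self ω
  · intro p _
    ext
    · simp [Fin.init_snoc]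
    · simp [Fin.snoc_last]
  · intro ω _
    rw [Fin.snoc_init_self]

end Aux

theorem stmt16 (d n b : ℕ) (hn : 2 ≤ n) (hb1 : 1 ≤ b) (hbn : b ≤ n)
    (Λ : ℝ)
    (f : Fin n → EuclideanSpace ℝ (Fin d) → ℝ)
    (hdiff : ∀ i, Differentiable ℝ (f i))
    (F : EuclideanSpace ℝ (Fin d) → ℝ) (hF : ∀ w, F w = (n : ℝ)⁻¹ * ∑ i, f i w)
    (hFdiff : Differentiable ℝ F)
    (hsmooth : ∀ w w' : EuclideanSpace ℝ (Fin d),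
      ‖gradient F w' - gradient F w‖ ≤ Λ * ‖w' - w‖)
    (Fhat : ℝ) (hbdd : ∀ w, Fhat ≤ F w)
    (γ η : ℝ) (hγ : 0 ≤ γ) (hη : 0 < η)
    (hvar : ∀ w : EuclideanSpace ℝ (Fin d),
      (∑ S ∈ Finset.powersetCard b (Finset.univ : Finset (Fin n)),
          ‖(b : ℝ)⁻¹ • ∑ i ∈ S, gradient (f i) w‖ ^ 2) / (n.choose b : ℝ)
        ≤ γ ^ 2 + η * ‖gradient F w‖ ^ 2)
    (μ₁ μ₂ : ℝ) (hμ : 0 < μ₁) (hμμ : μ₁ ≤ μ₂)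
    (H : (k : ℕ) → (Fin k → Finset (Fin n)) → Matrix (Fin d) (Fin d) ℝ)
    (hH : ∀ k (ω : Fin k → Finset (Fin n)), (H k ω).IsSymm ∧
        (H k ω - μ₁ • (1 : Matrix (Fin d) (Fin d) ℝ)).PosSemidef ∧
        (μ₂ • (1 : Matrix (Fin d) (Fin d) ℝ) - H k ω).PosSemidef)
    (α : ℝ) (hα0 : 0 < α) (hα1 : α < μ₁ / (μ₂ ^ 2 * η * Λ))
    (w0 : EuclideanSpace ℝ (Fin d))
    (w : (k : ℕ) → (Fin k → Finset (Fin n)) → EuclideanSpace ℝ (Fin d))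
    (hw0 : ∀ ω, w 0 ω = w0)
    (hrec : ∀ k (ω : Fin (k + 1) → Finset (Fin n)),
      w (k + 1) ω = w k (fun i => ω i.castSucc)
        - α • Matrix.toEuclideanLin (H k (fun i => ω i.castSucc))
            ((b : ℝ)⁻¹ • ∑ i ∈ ω (Fin.last k),
              gradient (f i) (w k (fun i => ω i.castSucc))))
    (L : ℕ) (hL : 1 ≤ L) :
    (L : ℝ)⁻¹ * ∑ k ∈ Finset.range L,
        (∑ ω ∈ Fintype.piFinset
            (fun _ : Fin k => Finset.powersetCard b (Finset.univ : Finset (Fin n))),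
          ‖gradient F (w k ω)‖ ^ 2) / ((n.choose b : ℝ)) ^ k
      ≤ α * μ₂ ^ 2 * γ ^ 2 * Λ / μ₁ + 2 * (F w0 - Fhat) / (α * μ₁ * L) := by
  classical
  have hμ₂ : 0 < μ₂ := lt_of_lt_of_le hμ hμμ
  -- Λ must be positive
  have hΛ : 0 < Λ := by
    by_contra h
    push_neg at h
    have hd : μ₂ ^ 2 * η * Λ ≤ 0 := by
      have h0 : 0 ≤ μ₂ ^ 2 * η := by positivity
      exact mul_nonpos_of_nonneg_of_nonpos h0 h
    have : μ₁ / (μ₂ ^ 2 * η * Λ) ≤ 0 := div_nonpos_of_nonneg_of_nonpos hμ.le hd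
    linarith
  set P := Finset.powersetCard b (Finset.univ : Finset (Fin n)) with hP
  set c : ℝ := (n.choose b : ℝ) with hcdef
  have hc : 0 < c := by
    rw [hcdef]
    exact_mod_cast Nat.choose_pos hbn
  set θ : ℝ := α * μ₁ - Λ * α ^ 2 * μ₂ ^ 2 * η / 2 with hθdef
  set K : ℝ := Λ * α ^ 2 * μ₂ ^ 2 * γ ^ 2 / 2 with hKdef
  have hK : 0 ≤ K := by positivity
  have hθ : α * μ₁ / 2 ≤ θ := by
    have hpos : 0 < μ₂ ^ 2 * η * Λ := by positivity
    have := (lt_div_iff₀ hpos).mp hα1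
    nlinarith
  have hθpos : 0 < θ := lt_of_lt_of_le (by positivity) hθ
  -- σ-algebra identity: sum of batch gradients
  have hgradsum : ∀ u : EuclideanSpace ℝ (Fin d),
      ∑ S ∈ P, ((b : ℝ)⁻¹ • ∑ i ∈ S, gradient (f i) u) = c • gradient F u := by
    intro u
    have hnc : n * (n - 1).choose (b - 1) = n.choose b * b := by
      obtain ⟨m, rfl⟩ : ∃ m, n = m + 1 := ⟨n - 1, by omega⟩
      obtain ⟨a, rfl⟩ : ∃ a, b = a + 1 := ⟨b - 1, by omega⟩
      simpa [Nat.succ_eq_add_one] using Nat.add_one_mul_choose_eq m a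
    have hb0 : (b : ℝ) ≠ 0 := by positivity
    have hn0 : (n : ℝ) ≠ 0 := by positivity
    rw [← Finset.smul_sum, hP, sum_powersetCard_sum hb1, grad_avg f hdiff F hF u,
      ← Nat.cast_smul_eq_nsmul ℝ]
    simp only [smul_smul]
    congr 1
    have hncr : (n : ℝ) * ((n - 1).choose (b - 1) : ℝ) = c * (b : ℝ) := by
      rw [hcdef]
      exact_mod_cast hnc
    field_simp
    linarith [hncr]
  -- per-step descent bound
  have hstep : ∀ (k : ℕ) (ω : Fin k → Finset (Fin n)),
      ∑ S ∈ P, F (w (k + 1) (Fin.snoc ω S))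
        ≤ c * (F (w k ω) - θ * ‖gradient F (w k ω)‖ ^ 2 + K) := by
    intro k ω
    set u := w k ω with hu
    set M := H k ω with hM
    set G := gradient F u with hG
    set g : Finset (Fin n) → EuclideanSpace ℝ (Fin d) :=
      fun S => (b : ℝ)⁻¹ • ∑ i ∈ S, gradient (f i) u with hg
    set T : EuclideanSpace ℝ (Fin d) →ₗ[ℝ] EuclideanSpace ℝ (Fin d) :=
      Matrix.toEuclideanLin M with hT
    have h1 : ∀ S : Finset (Fin n), w (k + 1) (Fin.snoc ω S) = u - α • T (g S) := by
      intro S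
      have hrest : (fun i : Fin k => (Fin.snoc ω S : Fin (k + 1) → Finset (Fin n)) i.castSucc)
          = ω := by
        funext i; simp
      rw [hrec k (Fin.snoc ω S), hrest]
      simp only [Fin.snoc_last, ← hu, ← hM, ← hT, ← hg]
      rfl
    have h2 : ∀ S : Finset (Fin n),
        F (u - α • T (g S)) ≤ F u - α * ⟪G, T (g S)⟫ + Λ / 2 * α ^ 2 * ‖T (g S)‖ ^ 2 := by
      intro S
      have hd := descent_lemma hFdiff hsmooth u (u - α • T (g S))
      have hyx : u - α • T (g S) - u = -(α • T (g S)) := by abel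
      rw [hyx, inner_neg_right, real_inner_smul_right, norm_neg, norm_smul] at hd
      simp only [Real.norm_eq_abs, abs_of_pos hα0] at hd
      calc F (u - α • T (g S)) ≤ F u + -(α * ⟪G, T (g S)⟫) + Λ / 2 * (α * ‖T (g S)‖) ^ 2 := hd
        _ = F u - α * ⟪G, T (g S)⟫ + Λ / 2 * α ^ 2 * ‖T (g S)‖ ^ 2 := by ring
    have hql : μ₁ * ‖G‖ ^ 2 ≤ ⟪G, T G⟫ := quad_lower M μ₁ (hH k ω).2.1 G
    have hvar' : ∑ S ∈ P, ‖g S‖ ^ 2 ≤ c * (γ ^ 2 + η * ‖G‖ ^ 2) := by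
      have h := hvar u
      rw [div_le_iff₀ hc] at h
      calc ∑ S ∈ P, ‖g S‖ ^ 2
          = ∑ S ∈ P, ‖(b : ℝ)⁻¹ • ∑ i ∈ S, gradient (f i) u‖ ^ 2 := rfl
        _ ≤ (γ ^ 2 + η * ‖G‖ ^ 2) * c := h
        _ = c * (γ ^ 2 + η * ‖G‖ ^ 2) := mul_comm _ _
    have hnorm : ∑ S ∈ P, ‖T (g S)‖ ^ 2 ≤ μ₂ ^ 2 * (c * (γ ^ 2 + η * ‖G‖ ^ 2)) := by
      calc ∑ S ∈ P, ‖T (g S)‖ ^ 2 ≤ ∑ S ∈ P, μ₂ ^ 2 * ‖g S‖ ^ 2 :=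
            Finset.sum_le_sum fun S _ =>
              norm_lin_sq_le M μ₁ μ₂ hμ hμμ (hH k ω).1 (hH k ω).2.1 (hH k ω).2.2 (g S)
        _ = μ₂ ^ 2 * ∑ S ∈ P, ‖g S‖ ^ 2 := (Finset.mul_sum _ _ _).symm
        _ ≤ μ₂ ^ 2 * (c * (γ ^ 2 + η * ‖G‖ ^ 2)) :=
            mul_le_mul_of_nonneg_left hvar' (by positivity)
    have hcardP : (P.card : ℝ) = c := by
      rw [hP, Finset.card_powersetCard, Finset.card_univ, Fintype.card_fin, hcdef]
    have hsum2 : ∑ S ∈ P, (F u - α * ⟪G, T (g S)⟫ + Λ / 2 * α ^ 2 * ‖T (g S)‖ ^ 2)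
        = c * F u - α * (c * ⟪G, T G⟫) + Λ / 2 * α ^ 2 * ∑ S ∈ P, ‖T (g S)‖ ^ 2 := by
      rw [Finset.sum_add_distrib, Finset.sum_sub_distrib, Finset.sum_const, nsmul_eq_mul,
        hcardP, ← Finset.mul_sum, ← Finset.mul_sum, ← inner_sum, ← map_sum, hgradsum u,
        map_smul, ← hG, real_inner_smul_right]
    have hsum1 : ∑ S ∈ P, F (w (k + 1) (Fin.snoc ω S))
        ≤ ∑ S ∈ P, (F u - α * ⟪G, T (g S)⟫ + Λ / 2 * α ^ 2 * ‖T (g S)‖ ^ 2) :=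
      Finset.sum_le_sum fun S _ => by rw [h1 S]; exact h2 S
    have e1 : α * (c * (μ₁ * ‖G‖ ^ 2)) ≤ α * (c * ⟪G, T G⟫) :=
      mul_le_mul_of_nonneg_left (mul_le_mul_of_nonneg_left hql hc.le) hα0.le
    have e2 : Λ / 2 * α ^ 2 * ∑ S ∈ P, ‖T (g S)‖ ^ 2
        ≤ Λ / 2 * α ^ 2 * (μ₂ ^ 2 * (c * (γ ^ 2 + η * ‖G‖ ^ 2))) :=
      mul_le_mul_of_nonneg_left hnorm (by positivity)
    have e3 : c * (F u - θ * ‖G‖ ^ 2 + K)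
        = c * F u - α * (c * (μ₁ * ‖G‖ ^ 2))
          + Λ / 2 * α ^ 2 * (μ₂ ^ 2 * (c * (γ ^ 2 + η * ‖G‖ ^ 2))) := by
      rw [hθdef, hKdef]; ring
    rw [hsum2] at hsum1
    have e4 : c * F u - α * (c * ⟪G, T G⟫) + Λ / 2 * α ^ 2 * ∑ S ∈ P, ‖T (g S)‖ ^ 2
        ≤ c * F u - α * (c * (μ₁ * ‖G‖ ^ 2))
          + Λ / 2 * α ^ 2 * (μ₂ ^ 2 * (c * (γ ^ 2 + η * ‖G‖ ^ 2))) :=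
      add_le_add (sub_le_sub_left e1 _) e2
    rw [e3]
    exact hsum1.trans e4
  -- aggregated quantities
  set A : ℕ → ℝ := fun k => ∑ ω ∈ Fintype.piFinset (fun _ : Fin k => P), F (w k ω) with hA
  set B : ℕ → ℝ :=
    fun k => ∑ ω ∈ Fintype.piFinset (fun _ : Fin k => P), ‖gradient F (w k ω)‖ ^ 2 with hB
  have hcard : ∀ k : ℕ, ((Fintype.piFinset (fun _ : Fin k => P)).card : ℝ) = c ^ k := by
    intro k
    rw [Fintype.card_piFinset]
    simp only [hP, Finset.card_powersetCard, Finset.card_univ, Fintype.card_fin,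
      Finset.prod_const, Finset.card_univ, Fintype.card_fin]
    push_cast [hcdef]
    ring
  have hstep2 : ∀ k : ℕ, A (k + 1) ≤ c * (A k - θ * B k + c ^ k * K) := by
    intro k
    calc A (k + 1) = ∑ ω ∈ Fintype.piFinset (fun _ : Fin k => P),
          ∑ S ∈ P, F (w (k + 1) (Fin.snoc ω S)) := by
          rw [hA]; exact sum_piFinset_snoc k P _
      _ ≤ ∑ ω ∈ Fintype.piFinset (fun _ : Fin k => P),
          c * (F (w k ω) - θ * ‖gradient F (w k ω)‖ ^ 2 + K) :=
          Finset.sum_le_sum fun ω _ => hstep k ω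
      _ = c * (A k - θ * B k + c ^ k * K) := by
          rw [← Finset.mul_sum]
          congr 1
          rw [Finset.sum_add_distrib, Finset.sum_sub_distrib, ← Finset.mul_sum,
            Finset.sum_const, nsmul_eq_mul, hcard k, hA, hB]
  have hlow : ∀ k : ℕ, c ^ k * Fhat ≤ A k := by
    intro k
    have h := Finset.sum_le_sum
      (fun ω (_ : ω ∈ Fintype.piFinset (fun _ : Fin k => P)) => hbdd (w k ω))
    rw [Finset.sum_const, nsmul_eq_mul, hcard k] at h
    exact h
  have hA0 : A 0 = F w0 := by
    have h0 : A 0 = ∑ ω ∈ Fintype.piFinset (fun _ : Fin 0 => P), F (w 0 ω) := by rw [hA]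
    have h : ∀ ω ∈ Fintype.piFinset (fun _ : Fin 0 => P), F (w 0 ω) = F w0 :=
      fun ω _ => by rw [hw0]
    rw [h0, Finset.sum_congr rfl h, Finset.sum_const, nsmul_eq_mul, hcard 0]
    norm_num
  have hBnonneg : ∀ k : ℕ, 0 ≤ B k := by
    intro k
    rw [hB]
    exact Finset.sum_nonneg fun ω _ => by positivity
  have hmain : ∀ m : ℕ, θ * (∑ k ∈ Finset.range m, B k / c ^ k) + A m / c ^ m
      ≤ A 0 + m * K := by
    intro m
    induction m with
    | zero => simp
    | succ m ih =>
      have hcp : 0 < c ^ (m + 1) := pow_pos hc _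
      have hcm : 0 < c ^ m := pow_pos hc _
      have hdiv : A (m + 1) / c ^ (m + 1) ≤ A m / c ^ m - θ * (B m / c ^ m) + K := by
        rw [div_le_iff₀ hcp]
        calc A (m + 1) ≤ c * (A m - θ * B m + c ^ m * K) := hstep2 m
          _ = (A m / c ^ m - θ * (B m / c ^ m) + K) * c ^ (m + 1) := by
              field_simp
              ring
      rw [Finset.sum_range_succ, Nat.cast_succ]
      have hexp : θ * (∑ k ∈ Finset.range m, B k / c ^ k + B m / c ^ m)
          = θ * (∑ k ∈ Finset.range m, B k / c ^ k) + θ * (B m / c ^ m) := by ring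
      rw [hexp]
      linarith
  -- final arithmetic
  have hSnn : 0 ≤ ∑ k ∈ Finset.range L, B k / c ^ k :=
    Finset.sum_nonneg fun k _ => div_nonneg (hBnonneg k) (pow_pos hc k).le
  have hALlow : Fhat ≤ A L / c ^ L := by
    rw [le_div_iff₀ (pow_pos hc L)]
    calc Fhat * c ^ L = c ^ L * Fhat := mul_comm _ _
      _ ≤ A L := hlow L
  have hkey : θ * (∑ k ∈ Finset.range L, B k / c ^ k) ≤ (F w0 - Fhat) + L * K := by
    have := hmain L
    rw [hA0] at this
    linarith
  have hD : 0 ≤ F w0 - Fhat := by linarith [hbdd w0]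
  have hLpos : (0 : ℝ) < L := by exact_mod_cast hL
  have hL0 : (L : ℝ) ≠ 0 := ne_of_gt hLpos
  have h10 : α * μ₁ * (∑ k ∈ Finset.range L, B k / c ^ k)
      ≤ 2 * (F w0 - Fhat) + 2 * L * K := by
    have h11 : α * μ₁ / 2 * (∑ k ∈ Finset.range L, B k / c ^ k)
        ≤ θ * (∑ k ∈ Finset.range L, B k / c ^ k) :=
      mul_le_mul_of_nonneg_right hθ hSnn
    linarith
  have hfinal : (L : ℝ)⁻¹ * (∑ k ∈ Finset.range L, B k / c ^ k)
      ≤ α * μ₂ ^ 2 * γ ^ 2 * Λ / μ₁ + 2 * (F w0 - Fhat) / (α * μ₁ * L) := by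
    rw [inv_mul_eq_div, div_le_iff₀ hLpos]
    calc (∑ k ∈ Finset.range L, B k / c ^ k)
        ≤ (2 * (F w0 - Fhat) + 2 * L * K) / (α * μ₁) :=
          (le_div_iff₀ (by positivity)).mpr (by linarith [h10])
      _ = (α * μ₂ ^ 2 * γ ^ 2 * Λ / μ₁ + 2 * (F w0 - Fhat) / (α * μ₁ * L)) * L := by
          rw [hKdef]
          field_simp
          ring
  simpa only [hB, hcdef] using hfinal
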